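/- Let μ, λ ∈ Λ_N. Then μ ⪯ λ if and only if μ ⊂ λ and λ_{j+2} ≤ μ_j for all 1 ≤ j ≤ N−2. -/
import Mathlib


open Finset

/-- `l` is a partition with at most `N` parts: `l 1 ≥ l 2 ≥ ⋯ ≥ l N (≥ 0)`. -/
def IsPartition {N : ℕ} (l : Fin N → ℕ) : Prop :=
  ∀ i j : Fin N, i ≤ j → l j ≤ l i

/-- Containment of diagrams: `μ ⊂ l`. -/
def SubDiag {N : ℕ} (μ l : Fin N → ℕ) : Prop := ∀ j, μ j ≤ l j

/-- The weight `|l| = l 1 + ⋯ + l N`. -/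
def wt {N : ℕ} (l : Fin N → ℕ) : ℕ := ∑ j, l j

/-- The skew diagram `l/μ` is a vertical strip: `μ j ≤ l j ≤ μ j + 1` for all `j`. -/
def VStrip {N : ℕ} (l μ : Fin N → ℕ) : Prop :=
  ∀ j, μ j ≤ l j ∧ l j ≤ μ j + 1

/-- The skew diagram `l/μ` is a horizontal strip:
`l 1 ≥ μ 1 ≥ l 2 ≥ μ 2 ≥ ⋯ ≥ l N ≥ μ N` (interlacing). -/
def HStrip {N : ℕ} (l μ : Fin N → ℕ) : Prop :=
  (∀ j, μ j ≤ l j) ∧ ∀ (j : ℕ) (h : j + 1 < N), l ⟨j + 1, h⟩ ≤ μ ⟨j, by omega⟩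

/-- `|l/μ| = |l| - |μ|` (for `μ ⊂ l`). -/
def skewWt {N : ℕ} (l μ : Fin N → ℕ) : ℕ := ∑ j, (l j - μ j)

/-- The proximity relation `μ ∼_r l`: there is a partition `ν ⊂ l, ν ⊂ μ` such that
`l/ν` and `μ/ν` are vertical strips with `|l/ν| + |μ/ν| ≤ r`. -/
def simRel {N : ℕ} (r : ℕ) (μ l : Fin N → ℕ) : Prop :=
  ∃ ν : Fin N → ℕ, IsPartition ν ∧ SubDiag ν l ∧ SubDiag ν μ ∧
    VStrip l ν ∧ VStrip μ ν ∧ skewWt l ν + skewWt μ ν ≤ r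

/-- `μ ⪯ l`: there is a partition `ν` with `μ ⊂ ν ⊂ l` such that `l/ν` and `ν/μ`
are horizontal strips. -/
def preceq {N : ℕ} (μ l : Fin N → ℕ) : Prop :=
  ∃ ν : Fin N → ℕ, IsPartition ν ∧ SubDiag μ ν ∧ SubDiag ν l ∧
    HStrip l ν ∧ HStrip ν μ

/-- The conjugate partition `l′ ∈ Λ_m` (for `l ∈ Λ_N` with `l 1 ≤ m`):
`l′ i = #{j : l j ≥ i}` (here `i : Fin m` is 0-based, so `i+1`-th row). -/
def conjP {N : ℕ} (m : ℕ) (l : Fin N → ℕ) : Fin m → ℕ :=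
  fun i => (Finset.univ.filter (fun j : Fin N => (i : ℕ) + 1 ≤ l j)).card

/-- The rectangular partition `m^N ∈ Λ_N`. -/
def rectP (m N : ℕ) : Fin N → ℕ := fun _ => m

/-- The complement `m^N − l` of `l ⊂ m^N` in `Λ_N`: `(m^N − l) j = m − l (N+1−j)`
(1-based), i.e. `m - l j.rev` (0-based). -/
def complP {N : ℕ} (m : ℕ) (l : Fin N → ℕ) : Fin N → ℕ :=
  fun j => m - l j.rev

/-- The natural embedding `Λ_N ↪ Λ_{N+1}` by appending a zero part. -/
def extendP {N : ℕ} (l : Fin N → ℕ) : Fin (N + 1) → ℕ := Fin.snoc l 0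

/-- For partitions `μ, λ ∈ Λ_N`, `μ ⪯ λ` iff `μ ⊂ λ` and
`λ_{j+2} ≤ μ_j` for all `1 ≤ j ≤ N − 2`. -/
theorem statement5 {N : ℕ} (mu lam : Fin N → ℕ) (hmu : IsPartition mu)
    (hlam : IsPartition lam) :
    preceq mu lam ↔
      (SubDiag mu lam ∧
        ∀ (j : ℕ) (h : j + 2 < N), lam ⟨j + 2, h⟩ ≤ mu ⟨j, by omega⟩) := by
  constructor
  · rintro ⟨ν, hν, hmn, hnl, ⟨_, hln⟩, ⟨_, hνμ⟩⟩
    refine ⟨fun j => le_trans (hmn j) (hnl j), fun j h => ?_⟩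
    calc lam ⟨j + 2, h⟩ ≤ ν ⟨j + 1, by omega⟩ := hln (j + 1) h
      _ ≤ mu ⟨j, by omega⟩ := hνμ j (by omega)
  · rintro ⟨hsub, hjump⟩
    refine ⟨fun j => if h : (j : ℕ) + 1 < N then max (mu j) (lam ⟨(j : ℕ) + 1, h⟩)
      else mu j, ?_, ?_, ?_, ⟨?_, ?_⟩, ⟨?_, ?_⟩⟩
    · intro i j hij
      by_cases hj : (j : ℕ) + 1 < N
      · have hi : (i : ℕ) + 1 < N := by
          have := (Fin.le_def.mp hij); omega
        simp only [dif_pos hj, dif_pos hi]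
        exact max_le_max (hmu i j hij)
          (hlam ⟨(i:ℕ)+1, hi⟩ ⟨(j:ℕ)+1, hj⟩ (Fin.mk_le_mk.mpr (by have := Fin.le_def.mp hij; omega)))
      · have hi := Fin.le_def.mp hij
        simp only [dif_neg hj]
        by_cases hi' : (i : ℕ) + 1 < N
        · simp only [dif_pos hi']
          exact le_max_of_le_left (hmu i j hij)
        · simp only [dif_neg hi']; exact hmu i j hij
    · intro j
      by_cases hj : (j : ℕ) + 1 < N
      · simp [dif_pos hj]
      · simp [dif_neg hj]
    · intro j
      by_cases hj : (j : ℕ) + 1 < N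
      · simp only [dif_pos hj]
        exact max_le (hsub j) (hlam j ⟨(j:ℕ)+1, hj⟩ (Fin.le_def.mpr (by simp)))
      · simp only [dif_neg hj]; exact hsub j
    · intro j
      by_cases hj : (j : ℕ) + 1 < N
      · simp only [dif_pos hj]
        exact max_le (hsub j) (hlam j ⟨(j:ℕ)+1, hj⟩ (Fin.le_def.mpr (by simp)))
      · simp only [dif_neg hj]; exact hsub j
    · intro j h
      simp only [dif_pos (show j + 1 < N from h)]
      exact le_max_right _ _
    · intro j
      by_cases hj : (j : ℕ) + 1 < N
      · simp [dif_pos hj]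
      · simp [dif_neg hj]
    · intro j h
      by_cases hj : j + 1 + 1 < N
      · simp only [dif_pos hj]
        exact max_le (hmu ⟨j, by omega⟩ ⟨j+1, h⟩ (Fin.le_def.mpr (by simp)))
          (hjump j hj)
      · simp only [dif_neg hj]
        exact hmu ⟨j, by omega⟩ ⟨j+1, h⟩ (Fin.le_def.mpr (by simp))
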